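/- (Theorem 4) Assume hypothesis H (the cited quadratic-stability lemma of Henrion et al., stated in the context). Suppose every polynomial p_{ij}^{(t)} has degree at most l, and that det M ≠ 0 for every member M of PA. The vertex set K_PA is finite; for each vertex matrix F ∈ K_PA write F(s) = F_0 + F_1 s + ⋯ + F_l s^l and let ℱ = (F_0, …, F_l) be its coefficient matrix. If there exist a matrix Q ∈ Matrix (Fin (2nl)) (Fin n) ℂ and, for each F ∈ K_PA, a Hermitian positive definite matrix P_F ∈ Matrix (Fin (nl)) (Fin (nl)) ℂ such that the Hermitian matrix Rᴴ (B ⊗ P_F) R + ℱᴴ Qᴴ R + Rᴴ Q ℱ is negative definite, then every member of PA is D_B-stable; that is, PA is robustly D_B-stable. -/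
import Mathlib


open Polynomial Matrix Kronecker

/-- A complex matrix is positive definite if it is Hermitian and
`re (xᴴ M x) > 0` for every nonzero vector `x`. -/
def IsCPosDef {ι : Type*} [Fintype ι] (M : Matrix ι ι ℂ) : Prop :=
  M.IsHermitian ∧ ∀ x : ι → ℂ, x ≠ 0 → 0 < (star x ⬝ᵥ M.mulVec x).re

/-- A complex matrix is negative definite if `-M` is positive definite. -/
def IsCNegDef {ι : Type*} [Fintype ι] (M : Matrix ι ι ℂ) : Prop :=
  IsCPosDef (-M)

/-- The LMI region associated with the Hermitian matrix `B`. -/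
def DRegion (B : Matrix (Fin 2) (Fin 2) ℂ) : Set ℂ :=
  {s : ℂ | (star ![1, s] ⬝ᵥ B.mulVec ![1, s]).re < 0}

/-- A polynomial matrix is `D`-stable if its determinant is nonzero and all the
complex roots of its determinant lie in `D`. -/
def DStable {n : ℕ} (D : Set ℂ) (A : Matrix (Fin n) (Fin n) ℝ[X]) : Prop :=
  A.det ≠ 0 ∧ ∀ z : ℂ, aeval z A.det = 0 → z ∈ D

/-- The structure matrix `R` of Definition 9: writing `x : ℂ^{(l+1)n}` in `l+1`
blocks `x_0, …, x_l` of size `n`, we have `R.mulVec x = (x_0,…,x_{l-1}; x_1,…,x_l)`. -/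
noncomputable def structR (n l : ℕ) :
    Matrix (Fin 2 × Fin l × Fin n) (Fin (l + 1) × Fin n) ℂ :=
  fun p q => if (q.1 : ℕ) = (p.2.1 : ℕ) + (p.1 : ℕ) ∧ q.2 = p.2.2 then 1 else 0

/-- The coefficient matrix `𝒞 = (C_0, …, C_l)` of a polynomial matrix
`C(s) = C_0 + C_1 s + ⋯ + C_l s^l`, with real entries regarded as complex. -/
noncomputable def coeffMat (n l : ℕ) (C : Matrix (Fin n) (Fin n) ℝ[X]) :
    Matrix (Fin n) (Fin (l + 1) × Fin n) ℂ :=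
  fun i q => ((C i q.2).coeff (q.1 : ℕ) : ℂ)

/-- The polytopic polynomial matrix family generated by the vertex polynomials `p`. -/
def PAfam (n m : ℕ) (p : Fin n → Fin n → Fin m → ℝ[X]) :
    Set (Matrix (Fin n) (Fin n) ℝ[X]) :=
  {A | ∀ i j, A i j ∈ convexHull ℝ (Set.range (p i j))}

/-- The vertex set of the polytopic polynomial matrix family. -/
def KPA (n m : ℕ) (p : Fin n → Fin n → Fin m → ℝ[X]) :
    Set (Matrix (Fin n) (Fin n) ℝ[X]) :=
  {A | ∀ i j, ∃ t, A i j = p i j t}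

lemma exists_convex_weights {m : ℕ} {E : Type*} [AddCommGroup E] [Module ℝ E]
    [Nonempty (Fin m)] (f : Fin m → E) (x : E)
    (hx : x ∈ convexHull ℝ (Set.range f)) :
    ∃ w : Fin m → ℝ, (∀ t, 0 ≤ w t) ∧ ∑ t, w t = 1 ∧ ∑ t, w t • f t = x := by
  rw [convexHull_eq] at hx
  obtain ⟨ι, T, w, z, hw0, hw1, hz, hx⟩ := hx
  classical
  have hτ : ∀ i : ι, ∃ t : Fin m, (i ∈ T → f t = z i) := by
    intro i
    by_cases hi : i ∈ T
    · obtain ⟨t, ht⟩ := hz i hi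
      exact ⟨t, fun _ => ht⟩
    · exact ⟨Classical.arbitrary _, fun h => absurd h hi⟩
  choose τ hτ using hτ
  refine ⟨fun t => ∑ i ∈ T.filter (fun i => τ i = t), w i, ?_, ?_, ?_⟩
  · intro t
    exact Finset.sum_nonneg fun i hi => hw0 i (Finset.mem_filter.mp hi).1
  · rw [Finset.sum_fiberwise T τ w]; exact hw1
  · have : ∀ t : Fin m, (∑ i ∈ T.filter (fun i => τ i = t), w i) • f t
        = ∑ i ∈ T.filter (fun i => τ i = t), w i • z i := by
      intro t
      rw [Finset.sum_smul]
      refine Finset.sum_congr rfl fun i hi => ?_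
      obtain ⟨hiT, hit⟩ := Finset.mem_filter.mp hi
      rw [← hit, hτ i hiT]
    rw [Finset.sum_congr rfl fun t _ => this t,
      Finset.sum_fiberwise T τ (fun i => w i • z i), ← hx,
      Finset.centerMass_eq_of_sum_1 _ _ hw1]

lemma sum_prod_weight {K : Type*} [Fintype K] [DecidableEq K] {m : ℕ}
    (W : K → Fin m → ℂ) (hW : ∀ k, ∑ t, W k t = 1) (k0 : K) (g : Fin m → ℂ) :
    ∑ c : K → Fin m, (∏ k, W k (c k)) * g (c k0) = ∑ t, W k0 t * g t := by
  classical
  have key := Fintype.prod_sum (fun (k : K) (t : Fin m) =>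
    W k t * (if k = k0 then g t else 1))
  have h1 : ∀ c : K → Fin m,
      (∏ k, W k (c k) * (if k = k0 then g (c k) else 1))
        = (∏ k, W k (c k)) * g (c k0) := by
    intro c
    rw [Finset.prod_mul_distrib]
    congr 1
    simp [Finset.prod_ite_eq']
  have h2 : ∀ k : K, (∑ t, W k t * (if k = k0 then g t else 1))
      = if k = k0 then ∑ t, W k0 t * g t else 1 := by
    intro k
    by_cases hk : k = k0 <;> simp [hk, hW k]
  rw [Finset.prod_congr rfl fun k _ => h2 k] at key
  simp only [Finset.prod_ite_eq', Finset.mem_univ, if_true] at key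
  calc ∑ c : K → Fin m, (∏ k, W k (c k)) * g (c k0)
      = ∑ c : K → Fin m, ∏ k, W k (c k) * (if k = k0 then g (c k) else 1) :=
        Finset.sum_congr rfl fun c _ => (h1 c).symm
    _ = ∑ t, W k0 t * g t := key.symm

lemma sum_mulVec' {ι κ μ : Type*} [Fintype κ] (s : Finset μ)
    (M : μ → Matrix ι κ ℂ) (x : κ → ℂ) :
    (∑ c ∈ s, M c).mulVec x = ∑ c ∈ s, (M c).mulVec x := by
  ext i
  simp only [Matrix.mulVec, dotProduct, Matrix.sum_apply, Finset.sum_apply,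
    Finset.sum_mul]
  rw [Finset.sum_comm]

lemma dotProduct_sum' {κ μ : Type*} [Fintype κ] (s : Finset μ)
    (v : κ → ℂ) (f : μ → κ → ℂ) :
    v ⬝ᵥ (∑ c ∈ s, f c) = ∑ c ∈ s, v ⬝ᵥ f c := by
  simp only [dotProduct, Finset.sum_apply, Finset.mul_sum]
  rw [Finset.sum_comm]

lemma quadform_sum_smul {ι κ : Type*} [Fintype ι] [Fintype κ] (x : ι → ℂ)
    (a : κ → ℂ) (M : κ → Matrix ι ι ℂ) :
    star x ⬝ᵥ (∑ c, a c • M c).mulVec x = ∑ c, a c * (star x ⬝ᵥ (M c).mulVec x) := by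
  rw [sum_mulVec', dotProduct_sum']
  refine Finset.sum_congr rfl fun c _ => ?_
  rw [Matrix.smul_mulVec, dotProduct_smul, smul_eq_mul]

lemma kron_sum {l m o p : Type*} [Fintype o] {κ : Type*} (s : Finset κ)
    (A : Matrix l m ℂ) (P : κ → Matrix o p ℂ) :
    A ⊗ₖ (∑ c ∈ s, P c) = ∑ c ∈ s, A ⊗ₖ (P c) := by
  ext i j
  simp [Matrix.kroneckerMap_apply, Matrix.sum_apply, Finset.mul_sum]

/-- Theorem 4: under hypothesis H (Lemma 1 of Henrion et al.), if
the vertex LMIs are feasible then the polytopic polynomial matrix family `PA` is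
robustly `D_B`-stable. -/
theorem polytopic_family_robust_DB_stable
    (n m l : ℕ) (hn : 1 ≤ n) (hm : 1 ≤ m) (hl : 1 ≤ l)
    (B : Matrix (Fin 2) (Fin 2) ℂ) (hB : B.IsHermitian)
    (p : Fin n → Fin n → Fin m → ℝ[X])
    (hpdeg : ∀ i j t, (p i j t).degree ≤ l)
    (hdet : ∀ M ∈ PAfam n m p, M.det ≠ 0)
    -- hypothesis H: the cited quadratic-stability lemma of Henrion et al.
    (hH : ∀ C : Matrix (Fin n) (Fin n) ℝ[X],
      (∀ i j, (C i j).degree ≤ l) → C.det ≠ 0 →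
      (∃ P : Matrix (Fin l × Fin n) (Fin l × Fin n) ℂ, IsCPosDef P ∧
        ∀ x : Fin (l + 1) × Fin n → ℂ, x ≠ 0 → (coeffMat n l C).mulVec x = 0 →
          (star x ⬝ᵥ ((structR n l)ᴴ * (B ⊗ₖ P) * structR n l).mulVec x).re < 0) →
      DStable (DRegion B) C)
    -- the vertex LMI feasibility data
    (Q : Matrix (Fin 2 × Fin l × Fin n) (Fin n) ℂ)
    (hLMI : ∀ F ∈ KPA n m p,
      ∃ P : Matrix (Fin l × Fin n) (Fin l × Fin n) ℂ, IsCPosDef P ∧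
        IsCNegDef
          ((structR n l)ᴴ * (B ⊗ₖ P) * structR n l
            + (coeffMat n l F)ᴴ * Qᴴ * structR n l
            + (structR n l)ᴴ * Q * coeffMat n l F)) :
    ∀ A ∈ PAfam n m p, DStable (DRegion B) A := by
  classical
  intro A hA
  haveI : Nonempty (Fin m) := ⟨⟨0, hm⟩⟩
  -- entrywise convex weights
  choose w hw0 hw1 hwA using fun i j => exists_convex_weights (p i j) (A i j) (hA i j)
  -- vertex matrices and their LMI certificates
  set R' := structR n l with hR'
  let Fc : ((Fin n × Fin n) → Fin m) → Matrix (Fin n) (Fin n) ℝ[X] :=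
    fun c i j => p i j (c (i, j))
  have hFc : ∀ c, Fc c ∈ KPA n m p := fun c i j => ⟨c (i, j), rfl⟩
  choose P hPpos hPneg using fun c => hLMI (Fc c) (hFc c)
  -- the convex weights on vertices
  let lam : ((Fin n × Fin n) → Fin m) → ℝ := fun c => ∏ k, w k.1 k.2 (c k)
  have hlam0 : ∀ c, 0 ≤ lam c := fun c =>
    Finset.prod_nonneg fun k _ => hw0 k.1 k.2 (c k)
  have hlam1 : ∑ c, lam c = 1 := by
    rw [← Fintype.prod_sum (fun (k : Fin n × Fin n) (t : Fin m) => w k.1 k.2 t)]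
    exact Finset.prod_eq_one fun k _ => hw1 k.1 k.2
  have hWc : ∀ k : Fin n × Fin n, ∑ t, ((w k.1 k.2 t : ℝ) : ℂ) = 1 := by
    intro k
    rw [← Complex.ofReal_sum, hw1, Complex.ofReal_one]
  have hlamc : ∀ c, ((lam c : ℝ) : ℂ) = ∏ k, ((w k.1 k.2 (c k) : ℝ) : ℂ) := by
    intro c; push_cast [lam]; rfl
  -- coefficient matrix decomposition
  have hcoeffA : coeffMat n l A = ∑ c, ((lam c : ℝ) : ℂ) • coeffMat n l (Fc c) := by
    ext i q
    rw [Matrix.sum_apply]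
    simp only [Matrix.smul_apply, smul_eq_mul]
    have hAij : (A i q.2).coeff q.1 = ∑ t, w i q.2 t * (p i q.2 t).coeff q.1 := by
      conv_lhs => rw [← hwA i q.2]
      rw [Polynomial.finset_sum_coeff]
      exact Finset.sum_congr rfl fun t _ => by rw [Polynomial.coeff_smul, smul_eq_mul]
    have key := sum_prod_weight (fun k t => ((w k.1 k.2 t : ℝ) : ℂ)) hWc (i, q.2)
      (fun t => ((p i q.2 t).coeff q.1 : ℂ))
    calc coeffMat n l A i q = ((A i q.2).coeff q.1 : ℂ) := rfl
      _ = ∑ t, ((w i q.2 t : ℝ) : ℂ) * ((p i q.2 t).coeff q.1 : ℂ) := by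
          rw [hAij]; push_cast; rfl
      _ = ∑ c : (Fin n × Fin n) → Fin m,
            (∏ k, ((w k.1 k.2 (c k) : ℝ) : ℂ)) * ((p i q.2 (c (i, q.2))).coeff q.1 : ℂ) :=
          key.symm
      _ = ∑ c, ((lam c : ℝ) : ℂ) * coeffMat n l (Fc c) i q := by
          refine Finset.sum_congr rfl fun c _ => ?_
          rw [hlamc c]; rfl
  -- degree of A
  have hdegA : ∀ i j, (A i j).degree ≤ l := by
    intro i j
    rw [← hwA i j]
    refine (Polynomial.degree_sum_le _ _).trans (Finset.sup_le fun t _ => ?_)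
    exact (Polynomial.degree_smul_le _ _).trans (hpdeg i j t)
  refine hH A hdegA (hdet A hA) ⟨∑ c, ((lam c : ℝ) : ℂ) • P c, ⟨?_, ?_⟩, ?_⟩
  · -- Hermitian
    have hP := fun c => (hPpos c).1
    simp only [Matrix.IsHermitian, Matrix.conjTranspose_sum, Matrix.conjTranspose_smul,
      Complex.star_def, Complex.conj_ofReal]
    exact Finset.sum_congr rfl fun c _ => by rw [(hPpos c).1.eq]
  · -- positive definite
    intro x hx
    rw [quadform_sum_smul, Complex.re_sum]
    simp only [Complex.re_ofReal_mul]
    have hex : ∃ c, 0 < lam c := by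
      by_contra h
      push_neg at h
      have : ∑ c, lam c = 0 :=
        Finset.sum_eq_zero fun c _ => le_antisymm (h c) (hlam0 c)
      rw [hlam1] at this
      exact one_ne_zero this
    obtain ⟨c0, hc0⟩ := hex
    exact Finset.sum_pos' (fun c _ => mul_nonneg (hlam0 c) ((hPpos c).2 x hx).le)
      ⟨c0, Finset.mem_univ _, mul_pos hc0 ((hPpos c0).2 x hx)⟩
  · -- quadratic form on the kernel
    intro x hx hker
    -- negative definiteness of each vertex LMI matrix at x
    have hMneg : ∀ c, (star x ⬝ᵥ (R'ᴴ * (B ⊗ₖ P c) * R'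
        + (coeffMat n l (Fc c))ᴴ * Qᴴ * R' + R'ᴴ * Q * coeffMat n l (Fc c)).mulVec x).re < 0 := by
      intro c
      have := (hPneg c).2 x hx
      rw [Matrix.neg_mulVec, dotProduct_neg, Complex.neg_re] at this
      linarith
    -- the big matrix identity
    have hbig : ∑ c, ((lam c : ℝ) : ℂ) • (R'ᴴ * (B ⊗ₖ P c) * R'
          + (coeffMat n l (Fc c))ᴴ * Qᴴ * R' + R'ᴴ * Q * coeffMat n l (Fc c))
        = R'ᴴ * (B ⊗ₖ (∑ c, ((lam c : ℝ) : ℂ) • P c)) * R'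
          + (coeffMat n l A)ᴴ * Qᴴ * R' + R'ᴴ * Q * coeffMat n l A := by
      simp only [smul_add, Finset.sum_add_distrib]
      congr 1
      · congr 1
        · rw [kron_sum, Matrix.mul_sum, Matrix.sum_mul]
          exact Finset.sum_congr rfl fun c _ => by
            rw [Matrix.kronecker_smul, Matrix.mul_smul, Matrix.smul_mul]
        · rw [hcoeffA, Matrix.conjTranspose_sum, Matrix.sum_mul, Matrix.sum_mul]
          refine Finset.sum_congr rfl fun c _ => ?_
          rw [Matrix.conjTranspose_smul, Complex.star_def, Complex.conj_ofReal,
            Matrix.smul_mul, Matrix.smul_mul]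
      · rw [hcoeffA, Matrix.mul_sum]
        exact Finset.sum_congr rfl fun c _ => (Matrix.mul_smul _ _ _).symm
    have hq := congrArg (fun M => (star x ⬝ᵥ M.mulVec x).re) hbig
    simp only at hq
    rw [quadform_sum_smul] at hq
    rw [Complex.re_sum] at hq
    simp only [Complex.re_ofReal_mul] at hq
    -- kernel annihilation
    have hN1 : star x ⬝ᵥ ((coeffMat n l A)ᴴ * Qᴴ * R').mulVec x = 0 := by
      rw [Matrix.mul_assoc, ← Matrix.mulVec_mulVec, Matrix.dotProduct_mulVec,
        ← Matrix.star_mulVec, hker]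
      simp
    have hN2 : star x ⬝ᵥ (R'ᴴ * Q * coeffMat n l A).mulVec x = 0 := by
      rw [← Matrix.mulVec_mulVec, hker, Matrix.mulVec_zero, dotProduct_zero]
    rw [Matrix.add_mulVec, Matrix.add_mulVec, dotProduct_add, dotProduct_add,
      hN1, hN2, add_zero, add_zero] at hq
    -- strict negativity of the convex combination
    have hsum : ∑ c, lam c * (star x ⬝ᵥ ((R'ᴴ * (B ⊗ₖ P c) * R'
        + (coeffMat n l (Fc c))ᴴ * Qᴴ * R' + R'ᴴ * Q * coeffMat n l (Fc c))).mulVec x).re < 0 := by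
      have hex : ∃ c, 0 < lam c := by
        by_contra h
        push_neg at h
        have : ∑ c, lam c = 0 :=
          Finset.sum_eq_zero fun c _ => le_antisymm (h c) (hlam0 c)
        rw [hlam1] at this
        exact one_ne_zero this
      obtain ⟨c0, hc0⟩ := hex
      have := Finset.sum_lt_sum (s := Finset.univ)
        (f := fun c => lam c * (star x ⬝ᵥ ((R'ᴴ * (B ⊗ₖ P c) * R'
          + (coeffMat n l (Fc c))ᴴ * Qᴴ * R' + R'ᴴ * Q * coeffMat n l (Fc c))).mulVec x).re)
        (g := fun _ => (0 : ℝ))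
        (fun c _ => mul_nonpos_of_nonneg_of_nonpos (hlam0 c) (hMneg c).le)
        ⟨c0, Finset.mem_univ _, mul_neg_of_pos_of_neg hc0 (hMneg c0)⟩
      simpa using this
    rw [hq] at hsum
    exact hsum
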